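/- Let ℓ ≥ 1 be a natural number, let N_1, …, N_ℓ be natural numbers with N_n ≥ 1, and for each n ∈ {1,…,ℓ} and each r ∈ {1,…,N_n} let p^{(n)}_r be a real number with 0 ≤ p^{(n)}_r ≤ 1. Define a real sequence by η_0 := 1 and η_n := ∑_{r=1}^{N_n} (Nat.choose N_n r) · p^{(n)}_r · (η_{n−1})^r for n = 1, …, ℓ. Then η_ℓ ≤ 2^(N_1 · N_2 · ⋯ · N_ℓ) − 1; in particular, η_ℓ ≤ 2^(N^ℓ) where N := max{N_1, …, N_ℓ}. -/

import Mathlib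

open Finset

theorem deep_nLIF_aux
    (ℓ : ℕ) (N : ℕ → ℕ)
    (p : ℕ → ℕ → ℝ)
    (hp : ∀ n r, 1 ≤ n → n ≤ ℓ → 1 ≤ r → r ≤ N n → 0 ≤ p n r ∧ p n r ≤ 1)
    (η : ℕ → ℝ) (hη0 : η 0 = 1)
    (hηrec : ∀ n, 1 ≤ n → n ≤ ℓ →
      η n = ∑ r ∈ Finset.Icc 1 (N n), (Nat.choose (N n) r : ℝ) * p n r * (η (n - 1)) ^ r) :
    ∀ n, n ≤ ℓ → 0 ≤ η n ∧ η n ≤ 2 ^ (∏ i ∈ Finset.Icc 1 n, N i) - 1 := by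
  intro n
  induction n with
  | zero => intro _; norm_num [hη0]
  | succ m ih =>
    intro hle
    have hm : m ≤ ℓ := Nat.le_of_succ_le hle
    obtain ⟨h0, h1⟩ := ih hm
    have hrec := hηrec (m + 1) (Nat.succ_le_succ (Nat.zero_le m)) hle
    simp only [Nat.add_sub_cancel] at hrec
    have hpow : ∀ r : ℕ, (0:ℝ) ≤ η m ^ r := fun r => pow_nonneg h0 r
    -- nonnegativity
    have hnn : 0 ≤ η (m + 1) := by
      rw [hrec]
      apply Finset.sum_nonneg
      intro r hr
      rw [Finset.mem_Icc] at hr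
      have := hp (m+1) r (Nat.succ_le_succ (Nat.zero_le m)) hle hr.1 hr.2
      exact mul_nonneg (mul_nonneg (Nat.cast_nonneg _) this.1) (hpow r)
    refine ⟨hnn, ?_⟩
    -- bound each term by C(N,r) η^r
    have step1 : η (m + 1) ≤ ∑ r ∈ Finset.Icc 1 (N (m+1)),
        (Nat.choose (N (m+1)) r : ℝ) * η m ^ r := by
      rw [hrec]
      apply Finset.sum_le_sum
      intro r hr
      rw [Finset.mem_Icc] at hr
      obtain ⟨hp0, hp1⟩ := hp (m+1) r (Nat.succ_le_succ (Nat.zero_le m)) hle hr.1 hr.2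
      calc (Nat.choose (N (m+1)) r : ℝ) * p (m+1) r * η m ^ r
          ≤ (Nat.choose (N (m+1)) r : ℝ) * 1 * η m ^ r := by
            apply mul_le_mul_of_nonneg_right _ (hpow r)
            exact mul_le_mul_of_nonneg_left hp1 (Nat.cast_nonneg _)
        _ = (Nat.choose (N (m+1)) r : ℝ) * η m ^ r := by ring
    -- binomial identity
    have step2 : ∑ r ∈ Finset.Icc 1 (N (m+1)),
        (Nat.choose (N (m+1)) r : ℝ) * η m ^ r = (η m + 1) ^ (N (m+1)) - 1 := by
      have hbin : (η m + 1) ^ (N (m+1)) =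
          ∑ r ∈ Finset.range (N (m+1) + 1), η m ^ r * (Nat.choose (N (m+1)) r : ℝ) := by
        rw [add_pow]
        simp [mul_comm]
      have hIcc : Finset.Icc 1 (N (m+1)) = Finset.Ioc 0 (N (m+1)) := by
        ext x; simp [Nat.lt_iff_add_one_le]
      rw [hbin, Finset.range_eq_Ico,
        show Finset.Ico 0 (N (m+1) + 1) = Finset.Icc 0 (N (m+1)) by rw [Finset.Ico_add_one_right_eq_Icc],
        ← Finset.sum_Ioc_add_eq_sum_Icc (Nat.zero_le _)]
      simp [hIcc, mul_comm]
    have step3 : η (m + 1) ≤ (η m + 1) ^ (N (m+1)) - 1 := by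
      rw [← step2]; exact step1
    have hbase : η m + 1 ≤ 2 ^ (∏ i ∈ Finset.Icc 1 m, N i) := by linarith
    have hbase0 : (0:ℝ) ≤ η m + 1 := by linarith
    have step4 : (η m + 1) ^ (N (m+1)) ≤
        (2 ^ (∏ i ∈ Finset.Icc 1 m, N i) : ℝ) ^ (N (m+1)) :=
      pow_le_pow_left₀ hbase0 hbase _
    have hprod : (∏ i ∈ Finset.Icc 1 (m+1), N i) =
        (∏ i ∈ Finset.Icc 1 m, N i) * N (m+1) :=
      Finset.prod_Icc_succ_top (Nat.succ_le_succ (Nat.zero_le m)) N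
    rw [hprod]
    have : ((2:ℝ) ^ (∏ i ∈ Finset.Icc 1 m, N i)) ^ (N (m+1))
        = 2 ^ ((∏ i ∈ Finset.Icc 1 m, N i) * N (m+1)) := by
      rw [← pow_mul]
    linarith [step4, this ▸ step4]

theorem deep_nLIF_pieces_upper_bound
    (ℓ : ℕ) (hℓ : 1 ≤ ℓ) (N : ℕ → ℕ) (hN : ∀ n, 1 ≤ n → n ≤ ℓ → 1 ≤ N n)
    (p : ℕ → ℕ → ℝ)
    (hp : ∀ n r, 1 ≤ n → n ≤ ℓ → 1 ≤ r → r ≤ N n → 0 ≤ p n r ∧ p n r ≤ 1)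
    (η : ℕ → ℝ) (hη0 : η 0 = 1)
    (hηrec : ∀ n, 1 ≤ n → n ≤ ℓ →
      η n = ∑ r ∈ Finset.Icc 1 (N n), (Nat.choose (N n) r : ℝ) * p n r * (η (n - 1)) ^ r) :
    η ℓ ≤ 2 ^ (∏ n ∈ Finset.Icc 1 ℓ, N n) - 1 ∧
    η ℓ ≤ 2 ^ (((Finset.Icc 1 ℓ).sup N) ^ ℓ) := by
  obtain ⟨h0, h1⟩ := deep_nLIF_aux ℓ N p hp η hη0 hηrec ℓ le_rfl
  refine ⟨h1, ?_⟩
  have hcard : (Finset.Icc 1 ℓ).card = ℓ := by simp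
  have hle : (∏ n ∈ Finset.Icc 1 ℓ, N n) ≤ ((Finset.Icc 1 ℓ).sup N) ^ ℓ := by
    calc (∏ n ∈ Finset.Icc 1 ℓ, N n)
        ≤ ∏ n ∈ Finset.Icc 1 ℓ, (Finset.Icc 1 ℓ).sup N :=
          Finset.prod_le_prod (fun _ _ => Nat.zero_le _)
            (fun i hi => Finset.le_sup hi)
      _ = ((Finset.Icc 1 ℓ).sup N) ^ ℓ := by rw [Finset.prod_const, hcard]
  have h2 : (2:ℝ) ^ (∏ n ∈ Finset.Icc 1 ℓ, N n) ≤ 2 ^ (((Finset.Icc 1 ℓ).sup N) ^ ℓ) :=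
    pow_le_pow_right₀ one_le_two hle
  linarith
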